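/- Let G be a tree grammar with finitely many nonterminals and finitely many rules, and cost function with cost(r) > 0 for every rule r. Let p be a program generated from a nonterminal X, and suppose p has a successor wrt X. Then there exists a node n of the derivation tree of p such that, writing Y for the left-hand nonterminal of the rule labeling n, the subprogram p_n rooted at n satisfies condition (*) (no nonterminal occurs twice along any root-to-leaf path of p_n) and p_n has a successor wrt Y. -/

import Mathlib

/-- Finitely-branching trees with nodes labeled by elements of `R` (derivation trees). -/
inductive Tree' (R : Type) : Type
  | node : R → List (Tree' R) → Tree' R

/-- The label of the root node. -/
def Tree'.rootLabel {R : Type} : Tree' R → R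
  | .node r _ => r

/-- A tree grammar: nonterminals `Γ`, derivation rules `R`, each rule having a
left-hand nonterminal and a list of argument nonterminals. -/
structure TreeGrammar where
  Γ : Type
  R : Type
  lhs : R → Γ
  args : R → List Γ

/-- Well-formed derivation trees (programs) of a tree grammar. -/
inductive TreeGrammar.WF (G : TreeGrammar) : Tree' G.R → Prop
  | node (r : G.R) (ts : List (Tree' G.R))
      (hlen : ts.length = (G.args r).length)
      (hwf : ∀ t ∈ ts, G.WF t)
      (hlhs : ∀ i : ℕ, (h : i < ts.length) →
        G.lhs (ts[i].rootLabel) = (G.args r)[i]'(hlen ▸ h)) :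
      G.WF (Tree'.node r ts)

/-- `p` is a program generated from the nonterminal `X`. -/
def TreeGrammar.GenFrom (G : TreeGrammar) (X : G.Γ) (p : Tree' G.R) : Prop :=
  G.WF p ∧ G.lhs p.rootLabel = X

/-- The cost of a program, extending a cost function on rules. -/
def costP {R : Type} (cost : R → ℝ) : Tree' R → ℝ
  | .node r ts => cost r + (ts.attach.map (fun t => costP cost t.1)).sum
decreasing_by
  have := List.sizeOf_lt_of_mem t.2
  simp only [Tree'.node.sizeOf_spec]
  omega

/-- The number of nodes of a derivation tree. -/
def sizeP {R : Type} : Tree' R → ℕ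
  | .node _ ts => 1 + (ts.attach.map (fun t => sizeP t.1)).sum
decreasing_by
  have := List.sizeOf_lt_of_mem t.2
  simp only [Tree'.node.sizeOf_spec]
  omega

/-- The depth of a derivation tree: number of nodes on a longest root-to-leaf path. -/
def depthP {R : Type} : Tree' R → ℕ
  | .node _ ts => 1 + (ts.attach.map (fun t => depthP t.1)).foldr max 0
decreasing_by
  have := List.sizeOf_lt_of_mem t.2
  simp only [Tree'.node.sizeOf_spec]
  omega

/-- `p'` is a successor of `p` with respect to the nonterminal `X`:
`p'` is generated from `X`, has strictly larger cost than `p`, and no program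
generated from `X` has cost strictly between the two. -/
def IsSucc (G : TreeGrammar) (cost : G.R → ℝ) (X : G.Γ) (p p' : Tree' G.R) : Prop :=
  G.GenFrom X p' ∧ costP cost p < costP cost p' ∧
    ∀ p'', G.GenFrom X p'' →
      ¬(costP cost p < costP cost p'' ∧ costP cost p'' < costP cost p')

/-- `X` occurs as the left-hand nonterminal of the rule labeling some node of the tree. -/
inductive OccursLhs (G : TreeGrammar) (X : G.Γ) : Tree' G.R → Prop
  | here (r : G.R) (ts : List (Tree' G.R)) : G.lhs r = X → OccursLhs G X (.node r ts)
  | there (r : G.R) (ts : List (Tree' G.R)) (t : Tree' G.R) :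
      t ∈ ts → OccursLhs G X t → OccursLhs G X (.node r ts)

/-- Condition (*): along every root-to-leaf path, no nonterminal occurs twice as the
left-hand nonterminal of the rules labeling the nodes on the path. -/
inductive StarCond (G : TreeGrammar) : Tree' G.R → Prop
  | node (r : G.R) (ts : List (Tree' G.R))
      (hsub : ∀ t ∈ ts, StarCond G t)
      (hnew : ∀ t ∈ ts, ¬ OccursLhs G (G.lhs r) t) :
      StarCond G (.node r ts)

/-- `IsSubtree s t`: `s` is the subtree of `t` rooted at some node of `t`. -/
inductive IsSubtree {R : Type} : Tree' R → Tree' R → Prop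
  | refl (t : Tree' R) : IsSubtree t t
  | child (s : Tree' R) (r : R) (ts : List (Tree' R)) (t : Tree' R) :
      t ∈ ts → IsSubtree s t → IsSubtree s (.node r ts)

/-- `IsStrictSubtree s t`: `s` is the subtree of `t` rooted at a strict descendant
of the root of `t`. -/
inductive IsStrictSubtree {R : Type} : Tree' R → Tree' R → Prop
  | child (s : Tree' R) (r : R) (ts : List (Tree' R)) (t : Tree' R) :
      t ∈ ts → IsSubtree s t → IsStrictSubtree s (.node r ts)

/-- The subtree of a tree at a given position (a list of child indices), if it exists. -/
def subtreeAt {R : Type} : Tree' R → List ℕ → Option (Tree' R)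
  | t, [] => some t
  | .node _ ts, i :: is =>
      match ts[i]? with
      | some t => subtreeAt t is
      | none => none

/-- Replacing the subtree at a given position by `q`. -/
def replaceAt {R : Type} : Tree' R → List ℕ → Tree' R → Tree' R
  | _, [], q => q
  | .node r ts, i :: is, q =>
      match ts[i]? with
      | some t => .node r (ts.set i (replaceAt t is q))
      | none => .node r ts

open scoped ENNReal in
/-- The Bellman operator associated with a tree grammar and a cost function. -/
noncomputable def bellman (G : TreeGrammar) (cost : G.R → ℝ) (c : G.Γ → ℝ≥0∞) : G.Γ → ℝ≥0∞ :=
  fun X => ⨅ r ∈ {r : G.R | G.lhs r = X},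
    (ENNReal.ofReal (cost r) + ((G.args r).map c).sum)

namespace Stmt11Aux
open Classical

theorem tree_ind {R : Type} {P : Tree' R → Prop}
    (h : ∀ r ts, (∀ t ∈ ts, P t) → P (Tree'.node r ts)) : ∀ t, P t
  | .node r ts => h r ts (fun t ht => tree_ind h t)
decreasing_by
  have := List.sizeOf_lt_of_mem ht
  simp only [Tree'.node.sizeOf_spec]
  omega

theorem costP_node {R : Type} (cost : R → ℝ) (r : R) (ts : List (Tree' R)) :
    costP cost (Tree'.node r ts) = cost r + (ts.map (costP cost)).sum := by
  rw [costP, List.attach_map_val]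

theorem sizeP_node {R : Type} (r : R) (ts : List (Tree' R)) :
    sizeP (Tree'.node r ts) = 1 + (ts.map sizeP).sum := by
  rw [sizeP, List.attach_map_val]

theorem rootLabel_node {R : Type} (r : R) (ts : List (Tree' R)) :
    (Tree'.node r ts).rootLabel = r := rfl

variable {G : TreeGrammar} {cost : G.R → ℝ}

theorem costP_pos (hpos : ∀ r, 0 < cost r) : ∀ t : Tree' G.R, 0 < costP cost t := by
  apply tree_ind
  intro r ts ih
  rw [costP_node]
  have : 0 ≤ (ts.map (costP cost)).sum := by
    apply List.sum_nonneg
    intro x hx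
    obtain ⟨t, ht, rfl⟩ := List.mem_map.mp hx
    exact (ih t ht).le
  have := hpos r
  linarith

theorem costP_le_sum (hpos : ∀ r, 0 < cost r) {t : Tree' G.R} {ts : List (Tree' G.R)}
    (ht : t ∈ ts) : costP cost t ≤ (ts.map (costP cost)).sum := by
  apply List.single_le_sum _ _ (List.mem_map_of_mem ht)
  intro x hx
  obtain ⟨u, hu, rfl⟩ := List.mem_map.mp hx
  exact (costP_pos hpos u).le

theorem costP_le_of_subtree (hpos : ∀ r, 0 < cost r) {s t : Tree' G.R}
    (h : IsSubtree s t) : costP cost s ≤ costP cost t := by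
  induction h with
  | refl => exact le_refl _
  | child r ts t hmem hsub ih =>
    refine ih.trans ?_
    rw [costP_node]
    have := costP_le_sum hpos hmem
    have := hpos r
    linarith

theorem costP_lt_node (hpos : ∀ r, 0 < cost r) {s t : Tree' G.R} {r : G.R}
    {ts : List (Tree' G.R)} (hsub : IsSubtree s t) (hmem : t ∈ ts) :
    costP cost s < costP cost (Tree'.node r ts) := by
  refine lt_of_le_of_lt (costP_le_of_subtree hpos hsub) ?_
  rw [costP_node]
  have := costP_le_sum hpos hmem
  have := hpos r
  linarith

theorem wf_child {r : G.R} {ts : List (Tree' G.R)} (h : G.WF (Tree'.node r ts))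
    {t : Tree' G.R} (ht : t ∈ ts) : G.WF t := by
  cases h with
  | node _ _ hlen hwf hlhs => exact hwf t ht

theorem wf_of_subtree {s t : Tree' G.R} (h : IsSubtree s t) (hw : G.WF t) : G.WF s := by
  induction h with
  | refl => exact hw
  | child r ts t hmem hsub ih => exact ih (wf_child hw hmem)

theorem occurs_subtree {X : G.Γ} {t : Tree' G.R} (h : OccursLhs G X t) :
    ∃ s : Tree' G.R, IsSubtree s t ∧ G.lhs s.rootLabel = X := by
  induction h with
  | here r ts hr => exact ⟨Tree'.node r ts, IsSubtree.refl _, hr⟩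
  | there r ts t hmem hocc ih =>
    obtain ⟨s, hsub, hl⟩ := ih
    exact ⟨s, IsSubtree.child s r ts t hmem hsub, hl⟩

theorem starCond_node_iff {r : G.R} {ts : List (Tree' G.R)} :
    StarCond G (Tree'.node r ts) ↔
      (∀ t ∈ ts, StarCond G t) ∧ ∀ t ∈ ts, ¬ OccursLhs G (G.lhs r) t := by
  constructor
  · intro h
    cases h with
    | node _ _ h1 h2 => exact ⟨h1, h2⟩
  · rintro ⟨h1, h2⟩
    exact StarCond.node r ts h1 h2

end Stmt11Aux
namespace Stmt11Aux
variable {G : TreeGrammar} {cost : G.R → ℝ}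

theorem replace_subtree {s t : Tree' G.R} (hsub : IsSubtree s t) (hwf : G.WF t)
    {u : Tree' G.R} (hu : G.WF u) (hl : G.lhs u.rootLabel = G.lhs s.rootLabel) :
    ∃ t' : Tree' G.R, G.WF t' ∧ G.lhs t'.rootLabel = G.lhs t.rootLabel ∧
      costP cost t' = costP cost t - costP cost s + costP cost u := by
  induction hsub with
  | refl => exact ⟨u, hu, by rw [hl], by ring⟩
  | child r ts t hmem hsub ih =>
    cases hwf with
    | node _ _ hlen hwfc hlhs =>
    obtain ⟨t', hwf', hl', hc'⟩ := ih (hwfc t hmem)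
    obtain ⟨i, hi, rfl⟩ := List.mem_iff_getElem.mp hmem
    refine ⟨Tree'.node r (ts.set i t'), ?_, rfl, ?_⟩
    · refine TreeGrammar.WF.node r _ (by simpa using hlen) ?_ ?_
      · intro x hx
        rcases List.mem_or_eq_of_mem_set hx with h | rfl
        · exact hwfc x h
        · exact hwf'
      · intro j hj
        have hj' : j < ts.length := by simpa using hj
        by_cases hij : i = j
        · subst hij
          have : (ts.set i t')[i] = t' := by
            rw [List.getElem_set]; simp
          rw [this, hl']
          exact hlhs i hj'
        · have : (ts.set i t')[j] = ts[j] := by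
            rw [List.getElem_set]; simp [hij]
          rw [this]
          exact hlhs j hj'
    · rw [costP_node, costP_node, List.map_set, List.sum_set']
      have hilen : i < (ts.map (costP cost)).length := by simpa using hi
      rw [dif_pos hilen]
      have : (ts.map (costP cost))[i] = costP cost ts[i] := by simp
      rw [this, hc']
      ring
end Stmt11Aux
namespace Stmt11Aux
variable {G : TreeGrammar} {cost : G.R → ℝ}

theorem bigger_of_not_star (hpos : ∀ r, 0 < cost r) :
    ∀ t : Tree' G.R, G.WF t → ¬ StarCond G t →
      ∃ u : Tree' G.R, G.WF u ∧ G.lhs u.rootLabel = G.lhs t.rootLabel ∧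
        costP cost t < costP cost u := by
  apply tree_ind
  intro r ts ih hwf hns
  by_cases hA : ∃ t ∈ ts, ¬ StarCond G t
  · obtain ⟨t, hmem, hnst⟩ := hA
    obtain ⟨u, hu, hlu, hcu⟩ := ih t hmem (wf_child hwf hmem) hnst
    obtain ⟨t', hwf', hl', hc'⟩ :=
      replace_subtree (cost := cost) (IsSubtree.child t r ts t hmem (IsSubtree.refl t)) hwf hu hlu
    exact ⟨t', hwf', hl', by rw [hc']; linarith⟩
  · push_neg at hA
    have hB : ∃ t ∈ ts, OccursLhs G (G.lhs r) t := by
      by_contra hB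
      push_neg at hB
      exact hns (starCond_node_iff.mpr ⟨hA, hB⟩)
    obtain ⟨t, hmem, hocc⟩ := hB
    obtain ⟨s0, hs0sub, hs0l⟩ := occurs_subtree hocc
    have hsub : IsSubtree s0 (Tree'.node r ts) := IsSubtree.child s0 r ts t hmem hs0sub
    obtain ⟨t', hwf', hl', hc'⟩ :=
      replace_subtree (cost := cost) hsub hwf hwf (by rw [rootLabel_node, hs0l])
    refine ⟨t', hwf', hl', ?_⟩
    have := costP_lt_node hpos (r := r) hs0sub hmem
    rw [hc']; linarith
end Stmt11Aux
namespace Stmt11Aux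

theorem sizeP_pos {R : Type} (t : Tree' R) : 0 < sizeP t := by
  cases t with
  | node r ts => rw [sizeP_node]; omega

theorem length_le_sum_sizes {R : Type} (ts : List (Tree' R)) :
    ts.length ≤ (ts.map sizeP).sum := by
  induction ts with
  | nil => simp
  | cons t ts ih =>
    simp only [List.map_cons, List.sum_cons, List.length_cons]
    have := sizeP_pos t
    omega

theorem finite_size_le {R : Type} [Finite R] :
    ∀ N : ℕ, {t : Tree' R | sizeP t ≤ N}.Finite := by
  intro N
  induction N with
  | zero =>
    convert Set.finite_empty
    ext t
    simp only [Set.mem_setOf_eq, Set.mem_empty_iff_false, iff_false]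
    have := sizeP_pos t
    omega
  | succ N ih =>
    haveI : Finite ↥{t : Tree' R | sizeP t ≤ N} := ih
    have hl : {l : List (Tree' R) | l.length ≤ N ∧ ∀ t ∈ l, sizeP t ≤ N}.Finite := by
      have h2 := List.finite_length_le ↥{t : Tree' R | sizeP t ≤ N} N
      have h3 := h2.image (List.map Subtype.val)
      refine h3.subset ?_
      rintro l ⟨hlen, hmem⟩
      refine ⟨l.pmap (fun t ht => (⟨t, ht⟩ : ↥{t : Tree' R | sizeP t ≤ N})) hmem, ?_, ?_⟩
      · rw [Set.mem_setOf_eq, List.length_pmap]; exact hlen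
      · rw [List.map_pmap]
        exact (List.pmap_eq_map (f := id) hmem).trans (List.map_id l)
    refine ((Set.finite_univ (α := R)).image2 Tree'.node hl).subset ?_
    rintro t ht
    cases t with
    | node r ts =>
      refine Set.mem_image2.mpr ⟨r, Set.mem_univ r, ts, ⟨?_, ?_⟩, rfl⟩
      · have h1 := length_le_sum_sizes ts
        rw [Set.mem_setOf_eq, sizeP_node] at ht
        omega
      · intro t hmem
        have h1 : sizeP t ≤ (ts.map sizeP).sum :=
          List.single_le_sum (by intro x hx; omega) _ (List.mem_map_of_mem hmem)
        rw [Set.mem_setOf_eq, sizeP_node] at ht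
        omega

theorem size_le_cost {R : Type} (cost : R → ℝ) (ε : ℝ) (hε : ∀ r, ε ≤ cost r) (hε0 : 0 ≤ ε) :
    ∀ t : Tree' R, (sizeP t : ℝ) * ε ≤ costP cost t := by
  apply tree_ind
  intro r ts ih
  rw [sizeP_node, costP_node]
  have h0 : ((1 + (ts.map sizeP).sum : ℕ) : ℝ) = 1 + ((ts.map sizeP).sum : ℝ) := by
    push_cast; ring
  rw [h0]
  have key : ((ts.map sizeP).sum : ℝ) * ε ≤ (ts.map (costP cost)).sum := by
    have h1 : ((ts.map sizeP).sum : ℝ) = (ts.map (fun t => (sizeP t : ℝ))).sum := by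
      rw [Nat.cast_list_sum, List.map_map]; rfl
    rw [h1, ← List.sum_map_mul_right]
    apply List.sum_le_sum
    intro t ht
    exact ih t ht
  have := hε r
  nlinarith [key]
end Stmt11Aux
namespace Stmt11Aux
variable {G : TreeGrammar}

theorem succ_exists [Fintype G.R] (cost : G.R → ℝ) (hpos : ∀ r, 0 < cost r)
    (Y : G.Γ) (q w : Tree' G.R) (hw : G.GenFrom Y w) (hcw : costP cost q < costP cost w) :
    ∃ q' : Tree' G.R, IsSucc G cost Y q q' := by
  haveI : Nonempty G.R := ⟨w.rootLabel⟩
  set B := costP cost w with hB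
  obtain ⟨r0, _, hr0⟩ := Finset.exists_mem_eq_inf' (Finset.univ_nonempty (α := G.R)) cost
  set ε := (Finset.univ : Finset G.R).inf' Finset.univ_nonempty cost with hε
  have hε0 : 0 < ε := hr0 ▸ hpos r0
  have hεle : ∀ r, ε ≤ cost r := fun r => Finset.inf'_le cost (Finset.mem_univ r)
  set N := ⌈B / ε⌉₊ with hN
  set D := {u : Tree' G.R | G.GenFrom Y u ∧ costP cost q < costP cost u ∧ costP cost u ≤ B}
    with hD
  have hDfin : D.Finite := by
    refine (finite_size_le N).subset ?_
    rintro u ⟨hu1, hu2, hu3⟩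
    have h1 := size_le_cost cost ε hεle hε0.le u
    have h2 : (sizeP u : ℝ) ≤ B / ε := by
      rw [le_div_iff₀ hε0]; linarith
    have h3 : (sizeP u : ℝ) ≤ (N : ℝ) := h2.trans (Nat.le_ceil _)
    exact_mod_cast h3
  have hDne : D.Nonempty := ⟨w, hw, hcw, le_refl _⟩
  obtain ⟨q', hq'D, hq'min⟩ := Set.exists_min_image D (costP cost) hDfin hDne
  obtain ⟨hgen, hgt, hle⟩ := hq'D
  refine ⟨q', hgen, hgt, ?_⟩
  rintro p'' hg ⟨h1, h2⟩
  have : p'' ∈ D := ⟨hg, h1, le_of_lt (h2.trans_le hle)⟩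
  exact absurd (hq'min p'' this) (not_le.mpr h2)

theorem main [Fintype G.R] (cost : G.R → ℝ) (hpos : ∀ r, 0 < cost r) :
    ∀ p : Tree' G.R, G.WF p →
      (∃ p' : Tree' G.R, IsSucc G cost (G.lhs p.rootLabel) p p') →
      ∃ q : Tree' G.R, IsSubtree q p ∧ StarCond G q ∧
        ∃ q' : Tree' G.R, IsSucc G cost (G.lhs q.rootLabel) q q' := by
  apply tree_ind
  intro r ts ih hwf hsucc
  by_cases hstar : StarCond G (Tree'.node r ts)
  · exact ⟨Tree'.node r ts, IsSubtree.refl _, hstar, hsucc⟩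
  by_cases hA : ∃ t ∈ ts, ¬ StarCond G t
  · obtain ⟨t, hmem, hnst⟩ := hA
    have hwt := wf_child hwf hmem
    obtain ⟨u, hu, hlu, hcu⟩ := bigger_of_not_star hpos t hwt hnst
    obtain ⟨t', hsucc'⟩ := succ_exists cost hpos (G.lhs t.rootLabel) t u ⟨hu, hlu⟩ hcu
    obtain ⟨q, hsub, hq, hs⟩ := ih t hmem hwt ⟨t', hsucc'⟩
    exact ⟨q, IsSubtree.child q r ts t hmem hsub, hq, hs⟩
  · push_neg at hA
    have hB : ∃ t ∈ ts, OccursLhs G (G.lhs r) t := by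
      by_contra hB
      push_neg at hB
      exact hstar (starCond_node_iff.mpr ⟨hA, hB⟩)
    obtain ⟨t, hmem, hocc⟩ := hB
    obtain ⟨s0, hs0sub, hs0l⟩ := occurs_subtree hocc
    obtain ⟨t', hwf', hl', hc'⟩ :=
      replace_subtree (cost := cost) hs0sub (wf_child hwf hmem) hwf
        (by rw [rootLabel_node, hs0l])
    have hlt : costP cost t < costP cost t' := by
      have h1 : costP cost s0 < costP cost (Tree'.node r ts) :=
        costP_lt_node hpos hs0sub hmem
      rw [hc']; linarith
    obtain ⟨u', hsucc'⟩ := succ_exists cost hpos (G.lhs t.rootLabel) t t' ⟨hwf', hl'⟩ hlt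
    exact ⟨t, IsSubtree.child t r ts t hmem (IsSubtree.refl t), hA t hmem,
      u', hsucc'⟩
end Stmt11Aux

/-- if a program `p` generated from `X` has a successor wrt `X`, then
some node of `p` determines a subprogram satisfying condition (*) which itself has a
successor wrt its left-hand nonterminal. -/
theorem stmt11 (G : TreeGrammar) [Fintype G.Γ] [Fintype G.R] (cost : G.R → ℝ)
    (hpos : ∀ r, 0 < cost r) (X : G.Γ) (p : Tree' G.R) (hp : G.GenFrom X p)
    (hsucc : ∃ p' : Tree' G.R, IsSucc G cost X p p') :
    ∃ q : Tree' G.R, IsSubtree q p ∧ StarCond G q ∧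
      ∃ q' : Tree' G.R, IsSucc G cost (G.lhs q.rootLabel) q q' := by
  obtain ⟨hwf, hl⟩ := hp
  subst hl
  exact Stmt11Aux.main cost hpos p hwf hsucc
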